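/- Under the threshold rounding (each fractional item e_i goes to whichever of agents i, i+1 holds the larger fraction of it), the total subsidy is at most ∑_{i=1}^{n−1} min{x_i, 1 − x_i}. -/

import Mathlib

open Finset

/-- Threshold rounding: fractional item `e_i` (shared by agents `i`, `i+1`, agent
`i` holding fraction `x i`) is rounded to whichever of the two holds the larger
fraction: `x̂ i = 1` if `x i ≥ 1/2` and `x̂ i = 0` otherwise (with the boundary
convention `x 0 = x̂ 0 = x n = x̂ n = 1`). The subsidy of agent `i` is
`s i = max{(x_{i-1} - x̂_{i-1})·c_i(e_{i-1}) + (x̂_i - x_i)·c_i(e_i), 0}`, where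
each cost lies in `[0,1]`. Then the total subsidy is at most
`∑_{i=1}^{n-1} min{x_i, 1 - x_i}`. -/
theorem thresholdRounding_subsidy (n : ℕ) (hn : 2 ≤ n) (x xh : ℕ → ℝ)
    (c : ℕ → ℕ → ℝ) (s : ℕ → ℝ)
    (hx : ∀ i, 1 ≤ i → i ≤ n - 1 → 0 ≤ x i ∧ x i ≤ 1)
    (hx0 : x 0 = 1) (hxn : x n = 1)
    (hxh0 : xh 0 = 1) (hxhn : xh n = 1)
    (hxh : ∀ i, 1 ≤ i → i ≤ n - 1 → xh i = if (1 : ℝ) / 2 ≤ x i then 1 else 0)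
    (hc : ∀ i e, 0 ≤ c i e ∧ c i e ≤ 1)
    (hs : ∀ i, 1 ≤ i → i ≤ n →
      s i = max ((x (i - 1) - xh (i - 1)) * c i (i - 1) + (xh i - x i) * c i i) 0) :
    ∑ i ∈ Finset.Icc 1 n, s i ≤ ∑ i ∈ Finset.Icc 1 (n - 1), min (x i) (1 - x i) := by
  set A : ℕ → ℝ := fun i => if (1:ℝ)/2 ≤ x i then 0 else x i with hA
  set B : ℕ → ℝ := fun i => if (1:ℝ)/2 ≤ x i then 1 - x i else 0 with hB
  have half : ((1:ℝ)/2 : ℝ) ≤ 1 := by norm_num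
  have hA0 : A 0 = 0 := by simp only [hA, hx0]; norm_num
  have hAn : A n = 0 := by simp only [hA, hxn]; norm_num
  have hB0 : B 0 = 0 := by simp only [hB, hx0]; norm_num
  have hBn : B n = 0 := by simp only [hB, hxn]; norm_num
  have hAnn : ∀ i, i ≤ n - 1 → 0 ≤ A i := by
    intro i hi
    rcases Nat.eq_zero_or_pos i with h0 | h1
    · rw [h0, hA0]
    · simp only [hA]
      split
      · exact le_refl 0
      · exact (hx i h1 hi).1
  have hBnn : ∀ i, 1 ≤ i → i ≤ n → 0 ≤ B i := by
    intro i h1 hi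
    rcases eq_or_lt_of_le hi with h | h
    · rw [h, hBn]
    · have hi' : i ≤ n - 1 := Nat.le_sub_one_of_lt h
      simp only [hB]
      split
      · linarith [(hx i h1 hi').2]
      · exact le_refl 0
  have hstep : ∀ i ∈ Icc 1 n, s i ≤ A (i - 1) + B i := by
    intro i hi
    rw [mem_Icc] at hi
    obtain ⟨h1, h2⟩ := hi
    rw [hs i h1 h2]
    have hi1 : i - 1 ≤ n - 1 := Nat.sub_le_sub_right h2 1
    have hT1 : (x (i - 1) - xh (i - 1)) * c i (i - 1) ≤ A (i - 1) := by
      rcases Nat.eq_zero_or_pos (i - 1) with h0 | hp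
      · rw [h0, hA0, hx0, hxh0]; simp
      · rw [hxh (i - 1) hp hi1]
        simp only [hA]
        split_ifs with hcase
        · exact mul_nonpos_of_nonpos_of_nonneg
            (by linarith [(hx (i-1) hp hi1).2]) (hc i (i-1)).1
        · have := hx (i-1) hp hi1
          calc (x (i-1) - 0) * c i (i-1) = x (i-1) * c i (i-1) := by ring_nf
            _ ≤ x (i-1) := mul_le_of_le_one_right this.1 (hc i (i-1)).2
    have hT2 : (xh i - x i) * c i i ≤ B i := by
      rcases eq_or_lt_of_le h2 with h | h
      · rw [h, hBn, hxn, hxhn]; simp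
      · have hi' : i ≤ n - 1 := Nat.le_sub_one_of_lt h
        rw [hxh i h1 hi']
        simp only [hB]
        split_ifs with hcase
        · have := hx i h1 hi'
          exact mul_le_of_le_one_right (by linarith [this.2]) (hc i i).2
        · exact mul_nonpos_of_nonpos_of_nonneg
            (by linarith [(hx i h1 hi').1]) (hc i i).1
    have h0 : (0:ℝ) ≤ A (i - 1) + B i :=
      add_nonneg (hAnn _ hi1) (hBnn i h1 h2)
    exact max_le (by linarith) h0
  have hAB : ∀ i ∈ Icc 1 (n-1), A i + B i = min (x i) (1 - x i) := by
    intro i hi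
    rw [mem_Icc] at hi
    have hxi := hx i hi.1 hi.2
    simp only [hA, hB]
    split_ifs with hcase
    · rw [min_eq_right (by linarith), zero_add]
    · push_neg at hcase
      rw [min_eq_left (by linarith), add_zero]
  have hshift : ∑ i ∈ Icc 1 n, A (i - 1) = ∑ j ∈ Icc 0 (n - 1), A j := by
    refine Finset.sum_nbij' (fun i => i - 1) (fun j => j + 1) ?_ ?_ ?_ ?_ ?_
    · intro a ha; rw [mem_Icc] at *; omega
    · intro b hb; rw [mem_Icc] at *; omega
    · intro a ha; rw [mem_Icc] at ha; omega
    · intro b hb; omega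
    · intro a ha; rfl
  have hIcc0 : Icc 0 (n - 1) = insert 0 (Icc 1 (n - 1)) := by
    ext j; simp [mem_Icc, mem_insert]; omega
  have hIccn : Icc 1 n = insert n (Icc 1 (n - 1)) := by
    ext j; simp [mem_Icc, mem_insert]; omega
  have hnot0 : (0:ℕ) ∉ Icc 1 (n - 1) := by simp
  have hnotn : n ∉ Icc 1 (n - 1) := by rw [mem_Icc]; omega
  calc ∑ i ∈ Icc 1 n, s i ≤ ∑ i ∈ Icc 1 n, (A (i - 1) + B i) :=
        Finset.sum_le_sum hstep
    _ = ∑ i ∈ Icc 1 n, A (i - 1) + ∑ i ∈ Icc 1 n, B i := Finset.sum_add_distrib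
    _ = ∑ j ∈ Icc 0 (n - 1), A j + ∑ i ∈ Icc 1 n, B i := by rw [hshift]
    _ = ∑ j ∈ Icc 1 (n - 1), A j + ∑ i ∈ Icc 1 (n - 1), B i := by
        rw [hIcc0, hIccn, Finset.sum_insert hnot0, Finset.sum_insert hnotn,
          hA0, hBn]; ring
    _ = ∑ i ∈ Icc 1 (n - 1), (A i + B i) := Finset.sum_add_distrib.symm
    _ = ∑ i ∈ Icc 1 (n - 1), min (x i) (1 - x i) := Finset.sum_congr rfl hAB
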